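/- Let m ≥ 3, let f0, f1 be the automatic transformations of the Mealy automaton B_m, and let S be the semigroup of transformations they generate under composition. Then every element s of S is equal, as a transformation, to a word of one of the following forms: (i) f0^(p₁) f1 f0^(p₂) f1 ⋯ f0^(p_{k−1}) f1 f0^(p_k) with 1 ≤ k ≤ m−1 and p_i ≥ 0 for all i, of total length at least 1; or (ii) f0^(p₁) f1 f0^(p₂) f1 ⋯ f0^(p_{m−2}) f1 f0^(2 p_{m−1}) f1 f0^(p_m) with p_i ≥ 0 for all i. -/
import Mathlib


/-- The sequence of states visited by a Mealy automaton with transition function `tr`,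
started at state `q`, while reading the infinite word `u`. -/
def stateSeq {X Q : Type*} (tr : X → Q → Q) (q : Q) (u : ℕ → X) : ℕ → Q
  | 0 => q
  | k + 1 => tr (u k) (stateSeq tr q u k)

/-- The automatic transformation of infinite words defined by the Mealy automaton with
transition function `tr` and output function `out` at the state `q`. -/
def autTrans {X Q : Type*} (tr : X → Q → Q) (out : X → Q → X) (q : Q) (u : ℕ → X) : ℕ → X :=
  fun n => out (u n) (stateSeq tr q u n)

/-- The transformation given by a word of states: the product (composition, applied from
right to left) of the corresponding automatic transformations. -/
def wordTrans {X Q : Type*} (tr : X → Q → Q) (out : X → Q → X) (w : List Q) :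
    (ℕ → X) → (ℕ → X) :=
  (w.map (autTrans tr out)).foldr (· ∘ ·) id

/-- The growth function of a Mealy automaton: `growth tr out n` is the number of distinct
transformations of infinite words obtained as compositions of exactly `n` automatic
transformations of the automaton. -/
noncomputable def growth {X Q : Type*} (tr : X → Q → Q) (out : X → Q → X) (n : ℕ) : ℕ :=
  Set.ncard { g : (ℕ → X) → (ℕ → X) | ∃ w : List Q, w.length = n ∧ wordTrans tr out w = g }

/-- The `i`-th finite difference of a function `γ`. -/
def fdiff (γ : ℕ → ℤ) : ℕ → ℕ → ℤ
  | 0, n => γ n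
  | i + 1, n => fdiff γ i n - fdiff γ i (n - 1)

/-- Output function of the automaton `B_m`: at `q0` the output swaps `x0` and `x1` and fixes
every other letter; at `q1` the output sends `x_i` to `x_{i+1}` for `i ≤ m−2` and fixes
`x_{m−1}`. -/
def bmOut (m : ℕ) : Fin m → Fin 2 → Fin m := fun x q =>
  if q = 0 then
    if (x : ℕ) = 0 then ⟨1 % m, Nat.mod_lt 1 x.pos⟩
    else if (x : ℕ) = 1 then ⟨0, x.pos⟩
    else x
  else ⟨min (x.val + 1) (m - 1), by have := x.pos; omega⟩

/-- Transition function of the automaton `B_m`: from `q0` the transition goes to `q1` on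
reading `x2` and stays at `q0` otherwise; from `q1` it goes to `q0` on reading `x0` and
stays at `q1` otherwise. -/
def bmTr (m : ℕ) : Fin m → Fin 2 → Fin 2 := fun x q =>
  if q = 0 then (if (x : ℕ) = 2 then 1 else 0)
  else (if (x : ℕ) = 0 then 0 else 1)

/-- The automatic transformations `f0, f1` of the automaton `B_m` at states `q0, q1`. -/
def bmF (m : ℕ) (q : Fin 2) : (ℕ → Fin m) → (ℕ → Fin m) := autTrans (bmTr m) (bmOut m) q

/-- The word `f0^(p₁) f1 f0^(p₂) f1 ⋯ f0^(p_{k−1}) f1 f0^(p_k)` determined by the list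
`[p₁, …, p_k]` of exponents (composed from right to left); the empty list gives the
identity. -/
def nfWord {α : Type*} (f0 f1 : α → α) : List ℕ → (α → α)
  | [] => id
  | [p] => f0^[p]
  | p :: ps => f0^[p] ∘ f1 ∘ nfWord f0 f1 ps

namespace BMProof

variable (m : ℕ)


abbrev W2 := List (Fin 2)

def lOut (m : ℕ) : W2 → Fin m → Fin m
  | [], x => x
  | q :: s, x => bmOut m (lOut m s x) q

def lTr (m : ℕ) : W2 → Fin m → W2
  | [], _ => []
  | q :: s, x => bmTr m (lOut m s x) q :: lTr m s x

@[simp] lemma lOut_nil (x : Fin m) : lOut m [] x = x := by simp [lOut]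
@[simp] lemma lOut_cons (q : Fin 2) (s : W2) (x : Fin m) :
    lOut m (q :: s) x = bmOut m (lOut m s x) q := by simp [lOut]
@[simp] lemma lTr_nil (x : Fin m) : lTr m [] x = [] := by simp [lTr]
@[simp] lemma lTr_cons (q : Fin 2) (s : W2) (x : Fin m) :
    lTr m (q :: s) x = bmTr m (lOut m s x) q :: lTr m s x := by simp [lTr]

lemma lOut_append (u v : W2) (x : Fin m) :
    lOut m (u ++ v) x = lOut m u (lOut m v x) := by
  induction u with
  | nil => simp
  | cons q u ih => simp [ih]

lemma lTr_append (u v : W2) (x : Fin m) :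
    lTr m (u ++ v) x = lTr m u (lOut m v x) ++ lTr m v x := by
  induction u with
  | nil => simp
  | cons q u ih => simp [ih, lOut_append]

/-- state sequence of the list machine -/
def lSS (w : W2) (u : ℕ → Fin m) : ℕ → W2
  | 0 => w
  | k + 1 => lTr m (lSS w u k) (u k)

/-- the transformation of the list machine -/
def lA (w : W2) (u : ℕ → Fin m) : ℕ → Fin m := fun n => lOut m (lSS m w u n) (u n)

lemma lSS_nil (u : ℕ → Fin m) (n : ℕ) : lSS m [] u n = [] := by
  induction n with
  | zero => rfl
  | succ k ih => show lTr m (lSS m [] u k) (u k) = []; rw [ih]; simp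

lemma lSS_cons (q : Fin 2) (w : W2) (u : ℕ → Fin m) (n : ℕ) :
    lSS m (q :: w) u n = stateSeq (bmTr m) q (lA m w u) n :: lSS m w u n := by
  induction n with
  | zero => rfl
  | succ k ih =>
      show lTr m (lSS m (q :: w) u k) (u k) = _
      rw [ih]
      simp [stateSeq, lSS, lA]

lemma wordTrans_cons (q : Fin 2) (w : W2) :
    wordTrans (bmTr m) (bmOut m) (q :: w) =
      autTrans (bmTr m) (bmOut m) q ∘ wordTrans (bmTr m) (bmOut m) w := rfl

lemma wordTrans_eq_lA (w : W2) : wordTrans (bmTr m) (bmOut m) w = lA m w := by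
  induction w with
  | nil =>
      funext u n; simp [wordTrans, lA, lSS_nil]
  | cons q w ih =>
      rw [wordTrans_cons, ih]
      funext u n
      show autTrans (bmTr m) (bmOut m) q (lA m w u) n = _
      unfold autTrans lA
      rw [lSS_cons]
      rfl

lemma wordTrans_append (u v : W2) :
    wordTrans (bmTr m) (bmOut m) (u ++ v) =
      wordTrans (bmTr m) (bmOut m) u ∘ wordTrans (bmTr m) (bmOut m) v := by
  induction u with
  | nil => rfl
  | cons q u ih => rw [List.cons_append, wordTrans_cons, wordTrans_cons, ih]; rfl

/-- bisimulation principle -/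
theorem bisim {R : W2 → W2 → Prop}
    (h : ∀ s t, R s t → ∀ x, lOut m s x = lOut m t x ∧ R (lTr m s x) (lTr m t x))
    {s t : W2} (hst : R s t) :
    wordTrans (bmTr m) (bmOut m) s = wordTrans (bmTr m) (bmOut m) t := by
  rw [wordTrans_eq_lA, wordTrans_eq_lA]
  funext u n
  have key : ∀ k, R (lSS m s u k) (lSS m t u k) := by
    intro k
    induction k with
    | zero => exact hst
    | succ j ih => exact (h _ _ ih (u j)).2
  exact (h _ _ (key n) (u n)).1

lemma out0_val (m : ℕ) (hm : 3 ≤ m) (x : Fin m) :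
    (bmOut m x 0).val = if x.val = 0 then 1 else if x.val = 1 then 0 else x.val := by
  have h1 : 1 % m = 1 := Nat.mod_eq_of_lt (by omega)
  show (if (0 : Fin 2) = 0 then _ else _ : Fin m).val = _
  rw [if_pos rfl]
  split_ifs <;> simp_all

lemma out1_val (m : ℕ) (x : Fin m) : (bmOut m x 1).val = min (x.val + 1) (m - 1) := by
  show (if (1 : Fin 2) = 0 then _ else _ : Fin m).val = _
  rw [if_neg (by decide)]

lemma tr0 (m : ℕ) (x : Fin m) : bmTr m x 0 = if x.val = 2 then 1 else 0 := by
  show (if (0 : Fin 2) = 0 then _ else _) = _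
  rw [if_pos rfl]

lemma tr1 (m : ℕ) (x : Fin m) : bmTr m x 1 = if x.val = 0 then 0 else 1 := by
  show (if (1 : Fin 2) = 0 then _ else _) = _
  rw [if_neg (by decide)]

/-- replicate notation -/
abbrev rp (n : ℕ) (q : Fin 2) : W2 := List.replicate n q

lemma rp_succ (n : ℕ) (q : Fin 2) : rp (n+1) q = q :: rp n q := rfl

lemma rp_add (a b : ℕ) (q : Fin 2) : rp (a+b) q = rp a q ++ rp b q :=
  List.replicate_add a b q

lemma rp_snoc (n : ℕ) (q : Fin 2) : rp (n+1) q = rp n q ++ [q] := by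
  rw [rp_add]; norm_num

/-- a chain of `q0`-machines on a letter ≥ 3: identity, frozen -/
lemma rp0_ge3 (m : ℕ) (hm : 3 ≤ m) (a : ℕ) (x : Fin m) (hx : 3 ≤ x.val) :
    lOut m (rp a 0) x = x ∧ lTr m (rp a 0) x = rp a 0 := by
  induction a with
  | zero => simp
  | succ k ih =>
      rw [rp_succ]
      refine ⟨?_, ?_⟩
      · simp only [lOut_cons, ih.1]
        apply Fin.ext
        rw [out0_val m hm]
        split_ifs <;> omega
      · simp only [lTr_cons, ih.1, ih.2, tr0]
        rw [if_neg (by omega)]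

/-- a chain of `q0`-machines on letter 2: outputs 2, all flip to q1 -/
lemma rp0_two (m : ℕ) (hm : 3 ≤ m) (a : ℕ) (x : Fin m) (hx : x.val = 2) :
    lOut m (rp a 0) x = x ∧ lTr m (rp a 0) x = rp a 1 := by
  induction a with
  | zero => simp
  | succ k ih =>
      rw [rp_succ]
      refine ⟨?_, ?_⟩
      · simp only [lOut_cons, ih.1]
        apply Fin.ext
        rw [out0_val m hm]
        split_ifs <;> omega
      · simp only [lTr_cons, ih.1, ih.2, tr0]
        rw [if_pos hx, rp_succ]

/-- a chain of `q0`-machines on a letter ≤ 1: swaps according to parity, frozen -/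
lemma rp0_01 (m : ℕ) (hm : 3 ≤ m) (a : ℕ) (x : Fin m) (hx : x.val ≤ 1) :
    ((lOut m (rp a 0) x).val = if a % 2 = 0 then x.val else 1 - x.val) ∧
      lTr m (rp a 0) x = rp a 0 := by
  induction a with
  | zero => simp
  | succ k ih =>
      have hv : (lOut m (rp k 0) x).val = if k % 2 = 0 then x.val else 1 - x.val := ih.1
      have hv1 : (lOut m (rp k 0) x).val ≤ 1 := by split_ifs at hv <;> omega
      rw [rp_succ]
      refine ⟨?_, ?_⟩
      · simp only [lOut_cons]
        rw [out0_val m hm, hv]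
        split_ifs <;> omega
      · simp only [lTr_cons, ih.2, tr0]
        rw [if_neg (by omega)]

/-- a chain of `q1`-machines on a letter ≥ 1: adds its length (capped), frozen -/
lemma rp1_pos (m : ℕ) (hm : 3 ≤ m) (a : ℕ) (x : Fin m) (hx : 1 ≤ x.val) :
    (lOut m (rp a 1) x).val = min (x.val + a) (m - 1) ∧ lTr m (rp a 1) x = rp a 1 := by
  induction a with
  | zero => have := x.isLt; simp; omega
  | succ k ih =>
      have hxm := x.isLt
      rw [rp_succ]
      refine ⟨?_, ?_⟩
      · simp only [lOut_cons]
        rw [out1_val, ih.1]; omega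
      · simp only [lTr_cons, ih.2, tr1]
        rw [if_neg (by omega)]

/-- a chain of `q1`-machines on letter 0: bottom dies -/
lemma rp1_zero (m : ℕ) (hm : 3 ≤ m) (i : ℕ) (x : Fin m) (hx : x.val = 0) :
    (lOut m (rp (i+1) 1) x).val = min (i + 1) (m - 1) ∧
      lTr m (rp (i+1) 1) x = rp i 1 ++ [0] := by
  have h1 : rp (i+1) 1 = rp i 1 ++ [1] := rp_snoc i 1
  have hb : (lOut m [(1 : Fin 2)] x).val = 1 := by
    simp only [lOut_cons, lOut_nil]
    rw [out1_val]; omega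
  have hbt : lTr m [(1 : Fin 2)] x = [0] := by
    simp only [lTr_cons, lTr_nil, tr1, lOut_nil]
    rw [if_pos hx]
  rw [h1, lOut_append, lTr_append]
  have := rp1_pos m hm i (lOut m [(1:Fin 2)] x) (by omega)
  refine ⟨?_, ?_⟩
  · rw [this.1, hb]; omega
  · rw [this.2, hbt]
/-! Z families -/

def ZoneE (v : W2) : Prop := ∃ c, v = rp (2*c) 0 ++ [1]
def Zone1 (v : W2) : Prop := ∃ i j, v = rp (i+1) 1 ++ rp j 0
def ZA (z : W2) : Prop := ∃ b, z = rp (2*b+1) 0 ++ [1]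
def ZB (z : W2) : Prop := ∃ b v, (ZoneE v ∨ Zone1 v) ∧ z = rp (2*b) 0 ++ [1] ++ v
def Z0 (z : W2) : Prop := ZA z ∨ ZB z

lemma Zone1_closure (m : ℕ) (hm : 3 ≤ m) {z : W2} (hz : Zone1 z) (x : Fin m) :
    1 ≤ (lOut m z x).val ∧ (2 ≤ (lOut m z x).val → Zone1 (lTr m z x)) := by
  obtain ⟨i, j, rfl⟩ := hz
  have hxm := x.isLt
  rw [lOut_append, lTr_append]
  set y := lOut m (rp j 0) x with hy
  rcases eq_or_ne x.val 2 with h2 | h2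
  · have h := rp0_two m hm j x h2
    rw [← hy] at h
    have h1 := rp1_pos m hm (i+1) y (by rw [h.1]; omega)
    rw [h.1] at h1 ⊢
    rw [h1.1, h1.2, h.2]
    refine ⟨by omega, fun _ => ⟨i + j, 0, ?_⟩⟩
    rw [show i + j + 1 = (i + 1) + j by omega, rp_add (i+1) j]
    simp
  · have htr : lTr m (rp j 0) x = rp j 0 ∧ y.val ≤ 1 ∨
        lTr m (rp j 0) x = rp j 0 ∧ 3 ≤ y.val := by
      rcases le_or_gt x.val 1 with hx1 | hx1
      · have h := rp0_01 m hm j x hx1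
        rw [← hy] at h
        left; exact ⟨h.2, by rw [h.1]; split_ifs <;> omega⟩
      · have hx3 : 3 ≤ x.val := by omega
        have h := rp0_ge3 m hm j x hx3
        rw [← hy] at h
        right; exact ⟨h.2, by rw [h.1]; omega⟩
    rcases eq_or_ne y.val 0 with hy0 | hy0
    · have h1 := rp1_zero m hm i y hy0
      rw [h1.1, h1.2]
      rcases htr with ⟨ht, _⟩ | ⟨ht, h3⟩
      · rw [ht]
        refine ⟨by omega, fun hge => ?_⟩
        have hi : 1 ≤ i := by omega
        obtain ⟨i', rfl⟩ := Nat.exists_eq_add_of_le hi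
        exact ⟨i', j + 1, by
          rw [show 1 + i' = i' + 1 by omega, rp_succ j 0]
          simp⟩
      · omega
    · have h1 := rp1_pos m hm (i+1) y (by omega)
      rw [h1.1, h1.2]
      rcases htr with ⟨ht, _⟩ | ⟨ht, _⟩ <;> rw [ht] <;>
        exact ⟨by omega, fun _ => ⟨i, j, rfl⟩⟩

lemma V_closure (m : ℕ) (hm : 3 ≤ m) {v : W2} (hv : ZoneE v ∨ Zone1 v) (x : Fin m) :
    1 ≤ (lOut m v x).val ∧
    ((lOut m v x).val = 1 → ∃ j, lTr m v x = rp j 0) ∧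
    ((lOut m v x).val = 2 → Zone1 (lTr m v x)) ∧
    (3 ≤ (lOut m v x).val → ZoneE (lTr m v x) ∨ Zone1 (lTr m v x)) := by
  have hxm := x.isLt
  rcases hv with ⟨c, rfl⟩ | h1
  · rw [lOut_append, lTr_append]
    have hy1 : (lOut m [(1 : Fin 2)] x).val = min (x.val + 1) (m-1) := by
      simp only [lOut_cons, lOut_nil]; rw [out1_val]
    set y := lOut m [(1 : Fin 2)] x with hy
    rcases eq_or_ne x.val 0 with hx0 | hx0
    · have htr : lTr m [(1 : Fin 2)] x = [0] := by
        simp only [lTr_cons, lTr_nil, tr1, lOut_nil]; rw [if_pos hx0]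
      have h := rp0_01 m hm (2*c) y (by omega)
      rw [h.2, htr]
      have hov : (lOut m (rp (2*c) 0) y).val = 1 := by
        rw [h.1]; rw [if_pos (by omega)]; omega
      exact ⟨by omega, fun _ => ⟨2*c+1, (rp_snoc (2*c) 0).symm⟩, by omega, by omega⟩
    · have htr : lTr m [(1 : Fin 2)] x = [1] := by
        simp only [lTr_cons, lTr_nil, tr1, lOut_nil]; rw [if_neg hx0]
      rcases eq_or_ne y.val 2 with hy2 | hy2
      · have h := rp0_two m hm (2*c) y hy2
        rw [h.2, htr, h.1]
        refine ⟨by omega, by omega, fun _ => ⟨2*c, 0, ?_⟩, by omega⟩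
        rw [← rp_snoc]; simp
      · have hy3 : 3 ≤ y.val := by omega
        have h := rp0_ge3 m hm (2*c) y hy3
        rw [h.2, htr, h.1]
        exact ⟨by omega, by omega, by omega, fun _ => Or.inl ⟨c, rfl⟩⟩
  · have h := Zone1_closure m hm h1 x
    obtain ⟨i, j, hv⟩ := h1
    refine ⟨h.1, fun h1' => ?_, fun h2 => h.2 (by omega), fun h3 => Or.inr (h.2 (by omega))⟩
    -- output 1 case : i = 0 and y = 0
    subst hv
    rw [lTr_append]
    rw [lOut_append] at h1'
    set y := lOut m (rp j 0) x with hy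
    rcases eq_or_ne y.val 0 with hy0 | hy0
    · have hz := rp1_zero m hm i y hy0
      have hi0 : i = 0 := by
        have := hz.1; omega
      subst hi0
      rw [hz.2]
      have htr : lTr m (rp j 0) x = rp j 0 := by
        rcases le_or_gt x.val 1 with hx1 | hx1
        · exact (rp0_01 m hm j x hx1).2
        · rcases eq_or_ne x.val 2 with h2 | h2
          · exfalso
            have := (rp0_two m hm j x h2).1
            rw [← hy] at this
            rw [this] at hy0; omega
          · exact (rp0_ge3 m hm j x (by omega)).2
      rw [htr]
      exact ⟨j + 1, by rw [rp_succ]; simp⟩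
    · exfalso
      have := (rp1_pos m hm (i+1) y (by omega)).1
      rw [this] at h1'; omega
lemma cons1_rp (n : ℕ) (l : W2) : rp n 1 ++ 1 :: l = rp (n+1) 1 ++ l := by
  rw [rp_snoc, List.append_assoc]; rfl

lemma Z0_closure (m : ℕ) (hm : 3 ≤ m) {z : W2} (hz : Z0 z) (x : Fin m) :
    (lOut m z x).val ≠ 1 ∧
    ((lOut m z x).val = 2 → Zone1 (lTr m z x)) ∧
    (3 ≤ (lOut m z x).val → Z0 (lTr m z x)) := by
  have hxm := x.isLt
  rcases hz with ⟨b, rfl⟩ | ⟨b, v, hv, rfl⟩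
  · -- ZA : rp (2b+1) 0 ++ [1]
    rw [lOut_append, lTr_append]
    have hy1 : (lOut m [(1 : Fin 2)] x).val = min (x.val + 1) (m-1) := by
      simp only [lOut_cons, lOut_nil]; rw [out1_val]
    set y := lOut m [(1 : Fin 2)] x with hy
    rcases eq_or_ne x.val 0 with hx0 | hx0
    · have h := rp0_01 m hm (2*b+1) y (by omega)
      rw [h.1]
      rw [if_neg (by omega)]
      refine ⟨by omega, by omega, by omega⟩
    · have htr : lTr m [(1 : Fin 2)] x = [1] := by
        simp only [lTr_cons, lTr_nil, tr1, lOut_nil]; rw [if_neg hx0]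
      rcases eq_or_ne y.val 2 with hy2 | hy2
      · have h := rp0_two m hm (2*b+1) y hy2
        rw [h.2, htr, h.1]
        refine ⟨by omega, fun _ => ⟨2*b+1, 0, ?_⟩, by omega⟩
        rw [← rp_snoc]; simp [show 2*b+1+1 = 2*b+2 by omega]
      · have hy3 : 3 ≤ y.val := by omega
        have h := rp0_ge3 m hm (2*b+1) y hy3
        rw [h.2, htr, h.1]
        exact ⟨by omega, by omega, fun _ => Or.inl ⟨b, rfl⟩⟩
  · -- ZB : rp (2b) 0 ++ [1] ++ v
    rw [List.append_assoc, lOut_append, lTr_append]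
    have hV := V_closure m hm hv x
    set wv := lOut m v x with hwv
    have hmid_out : (lOut m ([(1 : Fin 2)] ++ v) x).val = min (wv.val + 1) (m-1) := by
      rw [lOut_append]
      simp only [lOut_cons, lOut_nil]; rw [out1_val]
    have hmid_tr : lTr m ([(1 : Fin 2)] ++ v) x = 1 :: lTr m v x := by
      rw [lTr_append]
      simp only [lTr_cons, lTr_nil, tr1, lOut_nil]
      rw [if_neg (by omega)]
      rfl
    set w1 := lOut m ([(1 : Fin 2)] ++ v) x with hw1
    have hwv1 : 1 ≤ wv.val := hV.1
    have hwvm := wv.isLt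
    rcases eq_or_ne w1.val 2 with h2 | h2
    · -- top block flips, new state in Zone1
      have h := rp0_two m hm (2*b) w1 h2
      rw [h.2, hmid_tr, h.1]
      refine ⟨by omega, fun _ => ?_, by omega⟩
      -- show Zone1 (rp (2b) 1 ++ 1 :: lTr v x)
      have hwv2 : wv.val = 1 ∨ wv.val = 2 := by omega
      rcases hwv2 with h1 | hh2
      · obtain ⟨j, hj⟩ := hV.2.1 h1
        rw [hj]
        exact ⟨2*b, j, by rw [cons1_rp]⟩
      · obtain ⟨i', j', hj⟩ := hV.2.2.1 hh2
        rw [hj]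
        refine ⟨2*b + 1 + i', j', ?_⟩
        rw [cons1_rp, ← List.append_assoc, ← rp_add]
        rw [show 2*b+1+(i'+1) = 2*b+1+i'+1 by omega]
    · -- w1 ≥ 3 : frozen
      have h3 : 3 ≤ w1.val := by omega
      have h := rp0_ge3 m hm (2*b) w1 h3
      rw [h.2, hmid_tr, h.1]
      refine ⟨by omega, by omega, fun _ => Or.inr ⟨b, lTr m v x, ?_, by simp⟩⟩
      have hwv2 : 2 ≤ wv.val := by omega
      rcases eq_or_ne wv.val 2 with he | he
      · exact Or.inr (hV.2.2.1 he)
      · exact hV.2.2.2 (by omega)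

/-! the frozen upper part -/

def AOKk (m k : ℕ) (A : W2) : Prop :=
  ∀ x : Fin m, 2 ≤ x.val → lTr m A x = A ∧ (lOut m A x).val = min (x.val + k) (m-1)

lemma AOK_nil (m : ℕ) : AOKk m 0 [] := by
  intro x hx
  have := x.isLt
  refine ⟨rfl, ?_⟩
  simp; omega

lemma AOK_one (m : ℕ) (hm : 3 ≤ m) : AOKk m 1 [1] := by
  intro x hx
  refine ⟨?_, ?_⟩
  · simp only [lTr_cons, lTr_nil, tr1, lOut_nil]; rw [if_neg (by omega)]
  · simp only [lOut_cons, lOut_nil]; rw [out1_val]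

lemma AOK_step (m : ℕ) (hm4 : 4 ≤ m) (k c : ℕ) (hk : 1 ≤ k) {A : W2}
    (hA : AOKk m k A) : AOKk m (k+1) (1 :: (rp c 0 ++ A)) := by
  intro x hx
  have hxm := x.isLt
  have h := hA x hx
  have hy3 : 3 ≤ (lOut m A x).val := by rw [h.2]; omega
  have hblk := rp0_ge3 m (by omega) c (lOut m A x) hy3
  constructor
  · simp only [lTr_cons, lTr_append, lOut_append, hblk.1, hblk.2, h.1, tr1]
    rw [if_neg (by omega)]
  · simp only [lOut_cons, lOut_append, hblk.1]
    rw [out1_val, h.2]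
    omega
inductive Rel (m : ℕ) : W2 → W2 → Prop
  | diag (s : W2) : Rel m s s
  | mid (A : W2) (a : ℕ) (z : W2) (hA : AOKk m (m-3) A) (hz : Z0 z) :
      Rel m (A ++ (rp a 0 ++ (1 :: z))) (A ++ (rp a 0 ++ (0 :: z)))
  | blk (A : W2) (a : ℕ) (z : W2) (hA : AOKk m (m-3) A) (hz : Zone1 z) :
      Rel m (A ++ (rp a 0 ++ (1 :: z))) (A ++ (rp a 1 ++ (1 :: z)))

theorem Rel_closed (m : ℕ) (hm : 3 ≤ m) :
    ∀ s t, Rel m s t → ∀ x, lOut m s x = lOut m t x ∧ Rel m (lTr m s x) (lTr m t x) := by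
  intro s t h x
  cases h with
  | diag s => exact ⟨rfl, Rel.diag _⟩
  | mid A a z hA hz =>
      have hZ := Z0_closure m hm hz x
      set zo := lOut m z x with hzo
      set z' := lTr m z x with hz'
      have hzom := zo.isLt
      set ws : Fin m := bmOut m zo 1 with hwsd
      set wt : Fin m := bmOut m zo 0 with hwtd
      have hws : ws.val = min (zo.val + 1) (m-1) := out1_val m zo
      have hwt : wt.val = if zo.val = 0 then 1 else if zo.val = 1 then 0 else zo.val :=
        out0_val m hm zo
      have hos : lOut m (A ++ (rp a 0 ++ (1 :: z))) x = lOut m A (lOut m (rp a 0) ws) := by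
        rw [lOut_append, lOut_append, lOut_cons]
      have hot : lOut m (A ++ (rp a 0 ++ (0 :: z))) x = lOut m A (lOut m (rp a 0) wt) := by
        rw [lOut_append, lOut_append, lOut_cons]
      have hts : lTr m (A ++ (rp a 0 ++ (1 :: z))) x =
          lTr m A (lOut m (rp a 0) ws) ++ (lTr m (rp a 0) ws ++ (bmTr m zo 1 :: z')) := by
        rw [lTr_append, lTr_append, lOut_append, lOut_cons, lTr_cons]
      have htt : lTr m (A ++ (rp a 0 ++ (0 :: z))) x =
          lTr m A (lOut m (rp a 0) wt) ++ (lTr m (rp a 0) wt ++ (bmTr m zo 0 :: z')) := by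
        rw [lTr_append, lTr_append, lOut_append, lOut_cons, lTr_cons]
      rcases eq_or_ne zo.val 0 with h0 | h0
      · -- merge
        have hwe : ws = wt := by
          apply Fin.ext; rw [hws, hwt, if_pos h0]; omega
        have hte : bmTr m zo 1 = bmTr m zo 0 := by
          rw [tr0, tr1, if_pos h0, if_neg (by omega)]
        rw [hos, hot, hts, htt, hwe, hte]
        exact ⟨rfl, Rel.diag _⟩
      rcases eq_or_ne zo.val 1 with h1 | h1
      · exact absurd h1 hZ.1
      have hts1 : bmTr m zo 1 = 1 := by rw [tr1, if_neg h0]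
      have htt1 : bmTr m zo 0 = if zo.val = 2 then 1 else 0 := tr0 m zo
      rcases eq_or_ne zo.val 2 with h2 | h2
      · -- letter 2 from below
        rcases eq_or_ne m 3 with hm3 | hm3
        · -- m = 3 : outputs cap and everything merges
          have hwe : ws = wt := by
            apply Fin.ext; rw [hws, hwt, if_neg h0, if_neg h1]; omega
          rw [hos, hot, hts, htt, hwe, hts1, htt1, if_pos h2]
          exact ⟨rfl, Rel.diag _⟩
        · have hm4 : 4 ≤ m := by omega
          have hws3 : ws.val = 3 := by rw [hws]; omega
          have hwt2 : wt.val = 2 := by rw [hwt, if_neg h0, if_neg h1]; exact h2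
          have hbs := rp0_ge3 m hm a ws (by omega)
          have hbt := rp0_two m hm a wt hwt2
          have hAs := hA ws (by omega)
          have hAt := hA wt (by omega)
          have houte : lOut m A ws = lOut m A wt := by
            apply Fin.ext; rw [hAs.2, hAt.2]; omega
          rw [hos, hot, hts, htt, hbs.1, hbt.1, hbs.2, hbt.2, hAs.1, hAt.1, houte,
            hts1, htt1, if_pos h2]
          exact ⟨rfl, Rel.blk A a z' hA (hZ.2.1 h2)⟩
      · -- letter ≥ 3 from below
        have h3 : 3 ≤ zo.val := by omega
        have hws3 : 3 ≤ ws.val := by rw [hws]; omega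
        have hwt3 : wt.val = zo.val := by rw [hwt, if_neg h0, if_neg h1]
        have hbs := rp0_ge3 m hm a ws hws3
        have hbt := rp0_ge3 m hm a wt (by omega)
        have hAs := hA ws (by omega)
        have hAt := hA wt (by omega)
        have houte : lOut m A ws = lOut m A wt := by
          apply Fin.ext; rw [hAs.2, hAt.2, hws, hwt3]; omega
        rw [hos, hot, hts, htt, hbs.1, hbt.1, hbs.2, hbt.2, hAs.1, hAt.1, houte,
          hts1, htt1, if_neg h2]
        exact ⟨rfl, Rel.mid A a z' hA (hZ.2.2 h3)⟩
  | blk A a z hA hz =>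
      have hZ := Zone1_closure m hm hz x
      set zo := lOut m z x with hzo
      set z' := lTr m z x with hz'
      have hzom := zo.isLt
      have hzo1 : 1 ≤ zo.val := hZ.1
      set w1 : Fin m := bmOut m zo 1 with hw1d
      have hw1 : w1.val = min (zo.val + 1) (m-1) := out1_val m zo
      have hw1m := w1.isLt
      have hw12 : 2 ≤ w1.val := by rw [hw1]; omega
      have htrm : bmTr m zo 1 = 1 := by rw [tr1, if_neg (by omega)]
      have hos : lOut m (A ++ (rp a 0 ++ (1 :: z))) x = lOut m A (lOut m (rp a 0) w1) := by
        rw [lOut_append, lOut_append, lOut_cons]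
      have hot : lOut m (A ++ (rp a 1 ++ (1 :: z))) x = lOut m A (lOut m (rp a 1) w1) := by
        rw [lOut_append, lOut_append, lOut_cons]
      have hts : lTr m (A ++ (rp a 0 ++ (1 :: z))) x =
          lTr m A (lOut m (rp a 0) w1) ++ (lTr m (rp a 0) w1 ++ (bmTr m zo 1 :: z')) := by
        rw [lTr_append, lTr_append, lOut_append, lOut_cons, lTr_cons]
      have htt : lTr m (A ++ (rp a 1 ++ (1 :: z))) x =
          lTr m A (lOut m (rp a 1) w1) ++ (lTr m (rp a 1) w1 ++ (bmTr m zo 1 :: z')) := by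
        rw [lTr_append, lTr_append, lOut_append, lOut_cons, lTr_cons]
      have hbt := rp1_pos m hm a w1 (by omega)
      have hAt := hA (lOut m (rp a 1) w1) (by rw [hbt.1]; omega)
      rcases eq_or_ne w1.val 2 with h2 | h2
      · -- s-block flips and the two sides merge
        have hbs := rp0_two m hm a w1 h2
        have hAs := hA w1 (by omega)
        have houte : lOut m A w1 = lOut m A (lOut m (rp a 1) w1) := by
          apply Fin.ext; rw [hAs.2, hAt.2, hbt.1]; omega
        rw [hos, hot, hts, htt, hbs.1, hbs.2, hbt.2, hAs.1, hAt.1, houte, htrm]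
        exact ⟨rfl, Rel.diag _⟩
      · -- both frozen
        have h3 : 3 ≤ w1.val := by omega
        have hbs := rp0_ge3 m hm a w1 h3
        have hAs := hA w1 (by omega)
        have houte : lOut m A w1 = lOut m A (lOut m (rp a 1) w1) := by
          apply Fin.ext; rw [hAs.2, hAt.2, hbt.1]; omega
        rw [hos, hot, hts, htt, hbs.1, hbs.2, hbt.2, hAs.1, hAt.1, houte, htrm]
        exact ⟨rfl, Rel.blk A a z' hA (hZ.2 (by omega))⟩

/-- the master relation : flipping the middle state -/
theorem rule_master (m : ℕ) (hm : 3 ≤ m) {A : W2} (a : ℕ) {z : W2}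
    (hA : AOKk m (m-3) A) (hz : Z0 z) :
    wordTrans (bmTr m) (bmOut m) (A ++ (rp a 0 ++ (1 :: z))) =
      wordTrans (bmTr m) (bmOut m) (A ++ (rp a 0 ++ (0 :: z))) :=
  bisim m (Rel_closed m hm) (Rel.mid A a z hA hz)
/-! words from exponent lists -/

def toW : List ℕ → W2
  | [] => []
  | [p] => rp p 0
  | p :: ps => rp p 0 ++ (1 :: toW ps)

lemma toW_single (p : ℕ) : toW [p] = rp p 0 := rfl

lemma toW_cons {l : List ℕ} (p : ℕ) (hl : l ≠ []) :
    toW (p :: l) = rp p 0 ++ (1 :: toW l) := by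
  cases l with
  | nil => exact absurd rfl hl
  | cons q l => rfl

lemma toW_append {l r : List ℕ} (hl : l ≠ []) (hr : r ≠ []) :
    toW (l ++ r) = toW l ++ [1] ++ toW r := by
  induction l with
  | nil => exact absurd rfl hl
  | cons p l ih =>
      cases l with
      | nil =>
          rw [List.singleton_append, toW_cons p hr, toW_single]
          simp
      | cons q l =>
          rw [List.cons_append, toW_cons p (by simp), toW_cons p (by simp),
            ih (by simp)]
          simp

def bump : List ℕ → ℕ → List ℕ
  | [], _ => []
  | [p], k => [p + k]
  | p :: ps, k => p :: bump ps k

lemma bump_length (l : List ℕ) (k : ℕ) : (bump l k).length = l.length := by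
  induction l with
  | nil => rfl
  | cons p l ih =>
      cases l with
      | nil => rfl
      | cons q l => simpa [bump] using ih

lemma bump_ne_nil {l : List ℕ} (hl : l ≠ []) (k : ℕ) : bump l k ≠ [] := by
  intro h
  have := bump_length l k
  rw [h] at this
  simp at this
  exact hl (List.length_eq_zero_iff.mp this.symm)

lemma toW_bump {l : List ℕ} (hl : l ≠ []) (k : ℕ) :
    toW (bump l k) = toW l ++ rp k 0 := by
  induction l with
  | nil => exact absurd rfl hl
  | cons p l ih =>
      cases l with
      | nil => show toW [p+k] = _ ; rw [toW_single, toW_single, rp_add]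
      | cons q l =>
          show toW (p :: bump (q :: l) k) = _
          rw [toW_cons p (bump_ne_nil (by simp) k), toW_cons p (by simp),
            ih (by simp)]
          simp

/-! translation between nfWord and wordTrans -/

lemma wordTrans_rp0 (m : ℕ) (p : ℕ) :
    wordTrans (bmTr m) (bmOut m) (rp p 0) = (bmF m 0)^[p] := by
  induction p with
  | zero => rfl
  | succ k ih =>
      rw [rp_succ, wordTrans_cons, ih, Function.iterate_succ']
      rfl

lemma nfWord_toW (m : ℕ) (l : List ℕ) :
    nfWord (bmF m 0) (bmF m 1) l = wordTrans (bmTr m) (bmOut m) (toW l) := by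
  induction l with
  | nil => rfl
  | cons p l ih =>
      cases l with
      | nil => show _ = wordTrans _ _ (toW [p]); rw [toW_single, wordTrans_rp0]; rfl
      | cons q l =>
          rw [toW_cons p (by simp), wordTrans_append, wordTrans_cons]
          show (bmF m 0)^[p] ∘ bmF m 1 ∘ nfWord (bmF m 0) (bmF m 1) (q :: l) = _
          rw [ih, wordTrans_rp0]
          rfl

lemma N0 (m : ℕ) (p : ℕ) (ps : List ℕ) :
    bmF m 0 ∘ nfWord (bmF m 0) (bmF m 1) (p :: ps) =
      nfWord (bmF m 0) (bmF m 1) ((p+1) :: ps) := by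
  cases ps with
  | nil =>
      show bmF m 0 ∘ (bmF m 0)^[p] = (bmF m 0)^[p+1]
      rw [Function.iterate_succ']
  | cons q l =>
      show bmF m 0 ∘ ((bmF m 0)^[p] ∘ bmF m 1 ∘ nfWord _ _ (q :: l)) =
        (bmF m 0)^[p+1] ∘ bmF m 1 ∘ nfWord _ _ (q :: l)
      rw [Function.iterate_succ']
      rfl

lemma N1 (m : ℕ) {ps : List ℕ} (h : ps ≠ []) :
    bmF m 1 ∘ nfWord (bmF m 0) (bmF m 1) ps = nfWord (bmF m 0) (bmF m 1) (0 :: ps) := by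
  cases ps with
  | nil => exact absurd rfl h
  | cons q l =>
      show _ = (bmF m 0)^[0] ∘ bmF m 1 ∘ nfWord _ _ (q :: l)
      rfl

/-! the H-part decomposition -/

def oneW : List ℕ → W2
  | [] => [1]
  | c :: cs => 1 :: (rp c 0 ++ oneW cs)

lemma AOK_oneW (m : ℕ) (hm4 : 4 ≤ m) (cs : List ℕ) :
    AOKk m (cs.length + 1) (oneW cs) := by
  induction cs with
  | nil => exact AOK_one m (by omega)
  | cons c cs ih =>
      have := AOK_step m hm4 (cs.length + 1) c (by omega) ih
      simpa [oneW] using this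

lemma oneW_toW : ∀ (cs : List ℕ) (c : ℕ), (1 : Fin 2) :: toW (cs ++ [c]) = oneW cs ++ rp c 0 := by
  intro cs
  induction cs with
  | nil => intro c; simp [toW_single, oneW]
  | cons c' cs ih =>
      intro c
      rw [List.cons_append, toW_cons c' (by simp), ih c]
      show _ = 1 :: (rp c' 0 ++ oneW cs) ++ rp c 0
      simp

lemma Hdecomp (m : ℕ) (hm : 3 ≤ m) (cs : List ℕ) (hcs : cs.length = m - 3) :
    ∃ A a, toW (0 :: cs) = A ++ rp a 0 ∧ AOKk m (m-3) A := by
  rcases eq_or_ne m 3 with rfl | hm3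
  · have : cs = [] := List.length_eq_zero_iff.mp (by omega)
    subst this
    exact ⟨[], 0, by simp [toW_single], by simpa using AOK_nil 3⟩
  · have hm4 : 4 ≤ m := by omega
    rcases cs.eq_nil_or_concat with rfl | ⟨cs', c, rfl⟩
    · simp at hcs; omega
    · refine ⟨oneW cs', c, ?_, ?_⟩
      · rw [toW_cons 0 (by simp)]
        simp only [rp, List.replicate_zero, List.nil_append]
        simpa using oneW_toW cs' c
      · have := AOK_oneW m hm4 cs'
        have hl : cs'.length + 1 = m - 3 := by
          have := hcs; simp at this; omega
        rwa [hl] at this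

/-- master rule with trailing context, at the level of words -/
lemma flip_rule (m : ℕ) (hm : 3 ≤ m) (cs : List ℕ) (hcs : cs.length = m - 3)
    {z : W2} (hz : Z0 z) (T : W2) :
    wordTrans (bmTr m) (bmOut m) ((toW (0 :: cs) ++ (1 :: z)) ++ T) =
      wordTrans (bmTr m) (bmOut m) ((toW (0 :: cs) ++ (0 :: z)) ++ T) := by
  obtain ⟨A, a, hEq, hA⟩ := Hdecomp m hm cs hcs
  have h1 : toW (0 :: cs) ++ (1 :: z) = A ++ (rp a 0 ++ (1 :: z)) := by
    rw [hEq, List.append_assoc]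
  have h2 : toW (0 :: cs) ++ (0 :: z) = A ++ (rp a 0 ++ (0 :: z)) := by
    rw [hEq, List.append_assoc]
  calc wordTrans (bmTr m) (bmOut m) ((toW (0 :: cs) ++ (1 :: z)) ++ T)
      = wordTrans (bmTr m) (bmOut m) (toW (0 :: cs) ++ (1 :: z)) ∘
          wordTrans (bmTr m) (bmOut m) T := wordTrans_append m _ T
    _ = wordTrans (bmTr m) (bmOut m) (toW (0 :: cs) ++ (0 :: z)) ∘
          wordTrans (bmTr m) (bmOut m) T := by
            rw [h1, h2, rule_master m hm a hA hz]
    _ = wordTrans (bmTr m) (bmOut m) ((toW (0 :: cs) ++ (0 :: z)) ++ T) :=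
          (wordTrans_append m _ T).symm
lemma UA (m : ℕ) (hm : 3 ≤ m) (cs : List ℕ) (hcs : cs.length = m - 3) (k : ℕ)
    {rest : List ℕ} (hrest : rest ≠ []) :
    nfWord (bmF m 0) (bmF m 1) ((0 :: cs) ++ ([2*k+1] ++ rest)) =
      nfWord (bmF m 0) (bmF m 1) (bump (0 :: cs) (2*k+2) ++ rest) := by
  rw [nfWord_toW, nfWord_toW]
  have hz : Z0 (rp (2*k+1) 0 ++ [1]) := Or.inl ⟨k, rfl⟩
  have h := flip_rule m hm cs hcs hz (toW rest)
  have e1 : toW ((0 :: cs) ++ ([2*k+1] ++ rest)) =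
      (toW (0 :: cs) ++ (1 :: (rp (2*k+1) 0 ++ [1]))) ++ toW rest := by
    rw [toW_append (by simp) (by simp), toW_append (by simp) hrest, toW_single]
    simp
  have e2 : toW (bump (0 :: cs) (2*k+2) ++ rest) =
      (toW (0 :: cs) ++ (0 :: (rp (2*k+1) 0 ++ [1]))) ++ toW rest := by
    rw [toW_append (bump_ne_nil (by simp) _) hrest, toW_bump (by simp),
      show 2*k+2 = (2*k+1) + 1 by omega, rp_succ]
    simp
  rw [e1, e2, h]

lemma UB (m : ℕ) (hm : 3 ≤ m) (cs : List ℕ) (hcs : cs.length = m - 3) (k a b : ℕ) :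
    nfWord (bmF m 0) (bmF m 1) ((0 :: cs) ++ [2*k, 2*a, b]) =
      nfWord (bmF m 0) (bmF m 1) (bump (0 :: cs) (2*k+1) ++ [2*a, b]) := by
  rw [nfWord_toW, nfWord_toW]
  have hz : Z0 (rp (2*k) 0 ++ [1] ++ (rp (2*a) 0 ++ [1])) :=
    Or.inr ⟨k, rp (2*a) 0 ++ [1], Or.inl ⟨a, rfl⟩, rfl⟩
  have h := flip_rule m hm cs hcs hz (toW [b])
  have e1 : toW ((0 :: cs) ++ [2*k, 2*a, b]) =
      (toW (0 :: cs) ++ (1 :: (rp (2*k) 0 ++ [1] ++ (rp (2*a) 0 ++ [1])))) ++ toW [b] := by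
    rw [show ([2*k, 2*a, b] : List ℕ) = [2*k] ++ ([2*a] ++ [b]) by simp,
      toW_append (by simp) (by simp), toW_append (by simp) (by simp),
      toW_append (by simp) (by simp), toW_single, toW_single, toW_single]
    simp
  have e2 : toW (bump (0 :: cs) (2*k+1) ++ [2*a, b]) =
      (toW (0 :: cs) ++ (0 :: (rp (2*k) 0 ++ [1] ++ (rp (2*a) 0 ++ [1])))) ++ toW [b] := by
    rw [show ([2*a, b] : List ℕ) = [2*a] ++ [b] by simp,
      toW_append (bump_ne_nil (by simp) _) (by simp),
      toW_append (by simp) (by simp), toW_bump (by simp), toW_single, toW_single,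
      show 2*k+1 = (2*k) + 1 by omega, rp_succ]
    simp
  rw [e1, e2, h]

lemma split_one {l : List ℕ} (h : 1 ≤ l.length) :
    ∃ l' d, l = l' ++ [d] ∧ l'.length + 1 = l.length := by
  rcases l.eq_nil_or_concat with rfl | ⟨l1, d, rfl⟩
  · simp at h
  · exact ⟨l1, d, by simp, by simp⟩

lemma split_two {l : List ℕ} (h : 2 ≤ l.length) :
    ∃ l' d e, l = l' ++ [d, e] ∧ l'.length + 2 = l.length := by
  rcases l.eq_nil_or_concat with rfl | ⟨l1, e, rfl⟩
  · simp at h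
  · rcases l1.eq_nil_or_concat with rfl | ⟨l2, d, rfl⟩
    · simp at h
    · exact ⟨l2, d, e, by simp, by simp⟩

end BMProof

/-- Normal form for the semigroup `S_{B_m}`, `m ≥ 3`: every element of the semigroup
generated by the automatic transformations `f0, f1` of `B_m` equals, as a transformation,
a word `f0^(p₁) f1 ⋯ f0^(p_{k−1}) f1 f0^(p_k)` with `1 ≤ k ≤ m−1`, `p_i ≥ 0`, of total
length at least `1` (i.e. the exponent list is not `[0]`), or a word
`f0^(p₁) f1 ⋯ f0^(p_{m−2}) f1 f0^(2p_{m−1}) f1 f0^(p_m)` with `p_i ≥ 0`. -/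
theorem normal_form_bm (m : ℕ) (hm : 3 ≤ m) :
    ∀ w : List (Fin 2), w ≠ [] →
      (∃ ps : List ℕ, 1 ≤ ps.length ∧ ps.length ≤ m - 1 ∧ ps ≠ [0] ∧
        wordTrans (bmTr m) (bmOut m) w = nfWord (bmF m 0) (bmF m 1) ps) ∨
      (∃ qs : List ℕ, ∃ a b : ℕ, qs.length = m - 2 ∧
        wordTrans (bmTr m) (bmOut m) w =
          nfWord (bmF m 0) (bmF m 1) (qs ++ [2 * a, b])) := by
  intro w
  induction w with
  | nil => intro h; exact absurd rfl h
  | cons q w' ih =>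
      intro _
      have hstep : wordTrans (bmTr m) (bmOut m) (q :: w') =
          bmF m q ∘ wordTrans (bmTr m) (bmOut m) w' := BMProof.wordTrans_cons m q w'
      have hq : q = 0 ∨ q = 1 := by
        rcases q with ⟨v, hv⟩
        interval_cases v
        · exact Or.inl (Fin.ext rfl)
        · exact Or.inr (Fin.ext rfl)
      rcases eq_or_ne w' [] with rfl | hw'
      · -- base case, single letter
        rcases hq with rfl | rfl
        · left
          refine ⟨[1], by simp, by simp; omega, by simp, ?_⟩
          rw [hstep, BMProof.nfWord_toW, BMProof.toW_single]
          show bmF m 0 ∘ id = _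
          rw [show BMProof.rp 1 0 = [(0 : Fin 2)] from rfl]
          rfl
        · left
          refine ⟨[0, 0], by simp, by simp; omega, by simp, ?_⟩
          rw [hstep, BMProof.nfWord_toW]
          show bmF m 1 ∘ id = _
          rw [show BMProof.toW [0, 0] = [(1 : Fin 2)] from rfl]
          rfl
      rcases ih hw' with ⟨ps, hl1, hl2, hne, hEq⟩ | ⟨qs, a, b, hlen, hEq⟩
      · -- IH gave form (i)
        have hps : ps ≠ [] := by intro h; rw [h] at hl1; simp at hl1
        rcases hq with rfl | rfl
        · -- multiply by f0 on the left
          left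
          obtain ⟨p, ps', rfl⟩ : ∃ p ps', ps = p :: ps' := by
            cases ps with
            | nil => simp at hl1
            | cons p ps' => exact ⟨p, ps', rfl⟩
          refine ⟨(p+1) :: ps', by simp, by simpa using hl2, by simp, ?_⟩
          rw [hstep, hEq, BMProof.N0]
        · -- multiply by f1 on the left
          rcases Nat.lt_or_ge ps.length (m-1) with hlt | hge
          · left
            refine ⟨0 :: ps, by simp, by simp only [List.length_cons]; omega, ?_, ?_⟩
            · intro h
              injection h with h1 h2
              exact hps h2
            · rw [hstep, hEq, BMProof.N1 m hps]
          · -- ps.length = m - 1 : need a rewrite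
            have hlen' : ps.length = m - 1 := by omega
            obtain ⟨ps₁, d, e, rfl, hl⟩ := BMProof.split_two (l := ps) (by omega)
            have hcs : ps₁.length = m - 3 := by omega
            rcases Nat.even_or_odd d with ⟨c, hc⟩ | ⟨c, hc⟩
            · -- even : directly form (ii)
              right
              refine ⟨0 :: ps₁, c, e, by simp only [List.length_cons]; omega, ?_⟩
              rw [hstep, hEq, BMProof.N1 m hps]
              congr 1
              simp [show 2 * c = d by omega]
            · -- odd : rule A
              left
              have hb2 : (BMProof.bump (0 :: ps₁) (2*c+2)).length = ps₁.length + 1 := by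
                rw [BMProof.bump_length]; rfl
              refine ⟨BMProof.bump (0 :: ps₁) (2*c+2) ++ [e], ?_, ?_, ?_, ?_⟩
              · simp
              · simp only [List.length_append, List.length_singleton, hb2]
                omega
              · intro h
                have := congrArg List.length h
                simp only [List.length_append, List.length_singleton, hb2] at this
                omega
              · rw [hstep, hEq, BMProof.N1 m hps,
                  show (0 :: (ps₁ ++ [d, e]) : List ℕ) =
                    (0 :: ps₁) ++ ([2*c+1] ++ [e]) by simp [hc],
                  BMProof.UA m hm ps₁ hcs c (rest := [e]) (by simp)]
      · -- IH gave form (ii)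
        rcases hq with rfl | rfl
        · right
          obtain ⟨c, qs', rfl⟩ : ∃ c qs', qs = c :: qs' := by
            cases qs with
            | nil => simp at hlen; omega
            | cons c qs' => exact ⟨c, qs', rfl⟩
          refine ⟨(c+1) :: qs', a, b, by simpa using hlen, ?_⟩
          rw [hstep, hEq,
            show ((c :: qs') ++ [2*a, b] : List ℕ) = c :: (qs' ++ [2*a, b]) by simp,
            show (((c+1) :: qs') ++ [2*a, b] : List ℕ) = (c+1) :: (qs' ++ [2*a, b]) by simp]
          exact BMProof.N0 m c (qs' ++ [2*a, b])
        · right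
          obtain ⟨qs₁, d, rfl, hl⟩ := BMProof.split_one (l := qs) (by omega)
          have hcs : qs₁.length = m - 3 := by omega
          rcases Nat.even_or_odd d with ⟨c, hc⟩ | ⟨c, hc⟩
          · -- even : rule B
            refine ⟨BMProof.bump (0 :: qs₁) (2*c+1), a, b, ?_, ?_⟩
            · have hb2 : (BMProof.bump (0 :: qs₁) (2*c+1)).length = qs₁.length + 1 := by
                rw [BMProof.bump_length]; rfl
              rw [hb2]; omega
            · rw [hstep, hEq, BMProof.N1 m (by simp),
                show (0 :: ((qs₁ ++ [d]) ++ [2*a, b]) : List ℕ) =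
                  (0 :: qs₁) ++ [2*c, 2*a, b] by simp [hc, Nat.two_mul],
                BMProof.UB m hm qs₁ hcs c a b]
          · -- odd : rule A
            refine ⟨BMProof.bump (0 :: qs₁) (2*c+2), a, b, ?_, ?_⟩
            · have hb2 : (BMProof.bump (0 :: qs₁) (2*c+2)).length = qs₁.length + 1 := by
                rw [BMProof.bump_length]; rfl
              rw [hb2]; omega
            · rw [hstep, hEq, BMProof.N1 m (by simp),
                show (0 :: ((qs₁ ++ [d]) ++ [2*a, b]) : List ℕ) =
                  (0 :: qs₁) ++ ([2*c+1] ++ [2*a, b]) by simp [hc],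
                BMProof.UA m hm qs₁ hcs c (rest := [2*a, b]) (by simp)]
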